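/- Let Σ be a root system with basis Δ in a Euclidean space, Θ ⊆ Δ, and let p denote the orthogonal projection onto the orthogonal complement of the span of Θ. Then every element of p(Σ) is, in a unique way, a linear combination with integer coefficients all of the same sign of the elements of p(Δ ∖ Θ). -/

import Mathlib

open scoped RealInnerProductSpace

/-- Every element of the projection of Σ orthogonally to Θ is, in a unique way, a
linear combination with integer coefficients all of the same sign of the projections of
the simple roots outside Θ. -/
theorem stmt2 {V : Type*} [DecidableEq V] [NormedAddCommGroup V] [InnerProductSpace ℝ V]
    [FiniteDimensional ℝ V]
    (S : Set V) (hfin : S.Finite) (h0 : (0 : V) ∉ S)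
    (hrefl : ∀ α ∈ S, ∀ β ∈ S, β - (2 * ⟪β, α⟫ / ⟪α, α⟫) • α ∈ S)
    (Δ Θ : Finset V) (hΘΔ : Θ ⊆ Δ) (hΔS : (Δ : Set V) ⊆ S)
    (hind : LinearIndependent ℝ (fun x : Δ => (x : V)))
    (hbase : ∀ α ∈ S, ∃ c : Δ → ℤ, ((∀ i, 0 ≤ c i) ∨ (∀ i, c i ≤ 0)) ∧
      α = ∑ i : Δ, (c i : ℝ) • (i : V))
    (p : V → V)
    (hp : ∀ v, p v = (Submodule.orthogonalProjectionOnto ((Submodule.span ℝ (Θ : Set V))ᗮ) v : V)) :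
    ∀ v ∈ p '' S, ∃! c : (Δ \ Θ : Finset V) → ℤ,
      ((∀ i, 0 ≤ c i) ∨ (∀ i, c i ≤ 0)) ∧
      v = ∑ i : (Δ \ Θ : Finset V), (c i : ℝ) • p (i : V) := by
  classical
  set K := Submodule.span ℝ (Θ : Set V) with hKdef
  set P : V →ₗ[ℝ] V :=
    Kᗮ.subtype ∘ₗ (Submodule.orthogonalProjectionOnto Kᗮ : V →L[ℝ] Kᗮ).toLinearMap with hPdef
  have hpP : ∀ v, p v = P v := fun v => by rw [hp]; rfl
  -- kernel of P is K
  have hker : ∀ v : V, P v = 0 ↔ v ∈ K := by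
    intro v
    have : P v = 0 ↔ Submodule.orthogonalProjectionOnto Kᗮ v = 0 := by
      constructor
      · intro h; exact Subtype.ext h
      · intro h; simp [hPdef, h]
    rw [this, Submodule.orthogonalProjectionOnto_eq_zero_iff, Submodule.orthogonal_orthogonal]
  -- linear independence of Δ, reformulated over the ambient finset
  have hind' : ∀ f : V → ℝ, ∑ x ∈ Δ, f x • x = 0 → ∀ x ∈ Δ, f x = 0 := by
    intro f hf x hx
    have h1 := Fintype.linearIndependent_iff.mp hind (fun i => f i)
    have h2 : ∑ i : Δ, f (i : V) • (i : V) = 0 := by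
      rw [← Finset.sum_attach Δ (fun x => f x • x)] at hf
      exact hf
    exact h1 h2 ⟨x, hx⟩
  -- linear independence of the projections of Δ \ Θ
  have hli : ∀ g : V → ℝ, ∑ x ∈ Δ \ Θ, g x • P x = 0 → ∀ x ∈ Δ \ Θ, g x = 0 := by
    intro g hg x hx
    have hmem : (∑ x ∈ Δ \ Θ, g x • x) ∈ K := by
      rw [← hker]
      rw [map_sum]
      simpa [map_smul] using hg
    obtain ⟨f, -, hf⟩ := Submodule.mem_span_finset.mp hmem
    set F : V → ℝ := fun y => if y ∈ Θ then f y else -g y with hF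
    have hsum : ∑ y ∈ Δ, F y • y = 0 := by
      rw [← Finset.sum_sdiff hΘΔ]
      have e1 : ∑ y ∈ Δ \ Θ, F y • y = ∑ y ∈ Δ \ Θ, (-g y) • y := by
        apply Finset.sum_congr rfl
        intro y hy
        simp [hF, (Finset.mem_sdiff.mp hy).2]
      have e2 : ∑ y ∈ Θ, F y • y = ∑ y ∈ Θ, f y • y := by
        apply Finset.sum_congr rfl
        intro y hy
        simp [hF, hy]
      rw [e1, e2, hf]
      simp [neg_smul, Finset.sum_neg_distrib]
    have := hind' F hsum x (Finset.mem_sdiff.mp hx).1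
    have hxΘ : x ∉ Θ := (Finset.mem_sdiff.mp hx).2
    simp [hF, hxΘ] at this
    linarith
  -- P vanishes on Θ
  have hPΘ : ∀ x ∈ Θ, P x = 0 := by
    intro x hx
    rw [hker]
    exact Submodule.subset_span hx
  rintro v ⟨α, hα, rfl⟩
  obtain ⟨c, hcsign, hcsum⟩ := hbase α hα
  set C : V → ℤ := fun x => if h : x ∈ Δ then c ⟨x, h⟩ else 0 with hC
  have hCval : ∀ i : Δ, C (i : V) = c i := by
    intro i; simp [hC, i.2]
  -- the key sum identity for C
  have hCeq : p α = ∑ i : (Δ \ Θ : Finset V), ((C (i : V) : ℤ) : ℝ) • p (i : V) := by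
    have e0 : p α = ∑ x ∈ Δ, (C x : ℝ) • P x := by
      rw [hpP, hcsum, map_sum]
      rw [← Finset.sum_attach Δ (fun x => (C x : ℝ) • P x)]
      apply Finset.sum_congr rfl
      intro i _
      rw [map_smul, hCval]
    rw [e0, ← Finset.sum_sdiff hΘΔ]
    have e1 : ∑ x ∈ Θ, (C x : ℝ) • P x = 0 := by
      apply Finset.sum_eq_zero
      intro x hx
      rw [hPΘ x hx, smul_zero]
    rw [e1, add_zero, ← Finset.sum_attach (Δ \ Θ) (fun x => (C x : ℝ) • P x)]
    apply Finset.sum_congr rfl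
    intro i _
    rw [hpP]
  refine ⟨fun i => C (i : V), ⟨?_, hCeq⟩, ?_⟩
  · rcases hcsign with h | h
    · left; intro i
      by_cases hi : (i : V) ∈ Δ
      · simpa [hC, hi] using h ⟨i, hi⟩
      · simp [hC, hi]
    · right; intro i
      by_cases hi : (i : V) ∈ Δ
      · simpa [hC, hi] using h ⟨i, hi⟩
      · simp [hC, hi]
  · -- uniqueness
    rintro c' ⟨_, hc'⟩
    funext i
    have hdiff : ∑ x ∈ Δ \ Θ,
        (fun y => if h : y ∈ Δ \ Θ then ((c' ⟨y, h⟩ - C y : ℤ) : ℝ) else 0) x • P x = 0 := by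
      have h1 : ∑ x ∈ Δ \ Θ,
          (fun y => if h : y ∈ Δ \ Θ then ((c' ⟨y, h⟩ - C y : ℤ) : ℝ) else 0) x • P x
          = ∑ i : (Δ \ Θ : Finset V), ((c' i - C (i : V) : ℤ) : ℝ) • P (i : V) := by
        rw [← Finset.sum_attach (Δ \ Θ)
          (fun x => (fun y => if h : y ∈ Δ \ Θ then ((c' ⟨y, h⟩ - C y : ℤ) : ℝ) else 0) x • P x)]
        apply Finset.sum_congr rfl
        intro i _
        simp [i.2]
      rw [h1]
      have h2 : ∑ i : (Δ \ Θ : Finset V), ((c' i - C (i : V) : ℤ) : ℝ) • P (i : V)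
          = (∑ i : (Δ \ Θ : Finset V), ((c' i : ℤ) : ℝ) • P (i : V))
            - ∑ i : (Δ \ Θ : Finset V), ((C (i : V) : ℤ) : ℝ) • P (i : V) := by
        rw [← Finset.sum_sub_distrib]
        apply Finset.sum_congr rfl
        intro i _
        push_cast
        rw [sub_smul]
      rw [h2, sub_eq_zero]
      have hv1 : ∀ j : (Δ \ Θ : Finset V), ((c' j : ℤ) : ℝ) • P (j : V)
          = ((c' j : ℤ) : ℝ) • p (j : V) := fun j => by rw [hpP]
      have hv2 : ∀ j : (Δ \ Θ : Finset V), ((C (j : V) : ℤ) : ℝ) • P (j : V)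
          = ((C (j : V) : ℤ) : ℝ) • p (j : V) := fun j => by rw [hpP]
      simp_rw [hv1, hv2]
      rw [← hc', ← hCeq]
    have hz := hli _ hdiff i.1 i.2
    simp only [i.2, dif_pos] at hz
    have : (c' i : ℝ) = (C (i : V) : ℝ) := by
      have : ((c' ⟨i.1, i.2⟩ - C i.1 : ℤ) : ℝ) = 0 := hz
      push_cast at this
      linarith
    exact_mod_cast this
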